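/- Let α, γ, c₀, c₁, c₂, c₃, ε, A, V, β be real numbers with ε ≠ 0, and let ω : ℝ → ℝ be three times differentiable and satisfy, for every η ∈ ℝ, the second-order ODE β²(γ + α²V − c₃Aω(η))ω''(η) = β²c₂A(ω'(η))² + (V − c₀)ω(η) − c₁A²ω(η)³. Then the traveling wave u(x,t) = A·ω(β(x − Vt)/ε) is a classical solution of the gmKdV equation, i.e. ∂_t(u − α²ε²∂²_x u) + ∂_x(c₀u + c₁u³ − c₂ε²(∂_x u)² + ε²(γ − c₃u)∂²_x u) = 0 holds pointwise on ℝ × ℝ. -/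

import Mathlib

private lemma hda (f : ℝ → ℝ) (hf : Differentiable ℝ f) (a k m z : ℝ) :
    HasDerivAt (fun y => a * f (k * y + m)) (a * k * deriv f (k * z + m)) z := by
  have h1 : HasDerivAt (fun y : ℝ => k * y + m) k z := by
    simpa using ((hasDerivAt_id z).const_mul k).add_const m
  have h2 := ((hf (k * z + m)).hasDerivAt.comp z h1).const_mul a
  exact h2.congr_deriv (by ring)

/-- If `ω` is three times differentiable and satisfies the once-integrated
traveling-wave ODE, then `u(x,t) = A·ω(β(x − Vt)/ε)` is a classical solution of the
gmKdV equation pointwise on ℝ × ℝ. -/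
theorem gmKdV_traveling_wave_solution
    (α γ c₀ c₁ c₂ c₃ ε A V β : ℝ) (hε : ε ≠ 0)
    (ω : ℝ → ℝ)
    (hω1 : Differentiable ℝ ω)
    (hω2 : Differentiable ℝ (deriv ω))
    (hω3 : Differentiable ℝ (deriv (deriv ω)))
    (hODE : ∀ η : ℝ,
      β ^ 2 * (γ + α ^ 2 * V - c₃ * A * ω η) * deriv (deriv ω) η =
        β ^ 2 * c₂ * A * (deriv ω η) ^ 2 + (V - c₀) * ω η - c₁ * A ^ 2 * (ω η) ^ 3)
    (u : ℝ → ℝ → ℝ)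
    (hu : ∀ x t : ℝ, u x t = A * ω (β * (x - V * t) / ε)) :
    ∀ x t : ℝ,
      deriv (fun s : ℝ =>
          u x s - α ^ 2 * ε ^ 2 * deriv (fun y => deriv (fun z => u z s) y) x) t
        + deriv (fun y : ℝ =>
            c₀ * u y t + c₁ * (u y t) ^ 3
              - c₂ * ε ^ 2 * (deriv (fun z => u z t) y) ^ 2
              + ε ^ 2 * (γ - c₃ * u y t) * deriv (fun z => deriv (fun w => u w t) z) y) x
          = 0 := by
  intro x t
  set k : ℝ := β / ε with hk
  set p : ℝ := -(β * V) / ε with hp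
  -- x-slices of u
  have hux : ∀ s : ℝ, (fun z => u z s) = fun z => A * ω (k * z + p * s) := by
    intro s; funext z
    rw [hu, show β * (z - V * s) / ε = k * z + p * s from by rw [hk, hp]; ring]
  have dux : ∀ s y : ℝ, deriv (fun z => u z s) y = A * k * deriv ω (k * y + p * s) := by
    intro s y; rw [hux s]; exact (hda ω hω1 A k (p * s) y).deriv
  have duxx : ∀ s y : ℝ,
      deriv (fun w => deriv (fun z => u z s) w) y
        = A * k * k * deriv (deriv ω) (k * y + p * s) := by
    intro s y
    have h : (fun w => deriv (fun z => u z s) w) = fun w => A * k * deriv ω (k * w + p * s) :=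
      funext fun w => dux s w
    rw [h]; exact (hda (deriv ω) hω2 (A * k) k (p * s) y).deriv
  set e : ℝ := k * x + p * t with he
  -- derivative of the ODE
  have hLR : (fun η => β ^ 2 * (γ + α ^ 2 * V - c₃ * A * ω η) * deriv (deriv ω) η)
      = fun η => β ^ 2 * c₂ * A * (deriv ω η) ^ 2 + (V - c₀) * ω η - c₁ * A ^ 2 * (ω η) ^ 3 :=
    funext hODE
  have hL : HasDerivAt (fun η => β ^ 2 * (γ + α ^ 2 * V - c₃ * A * ω η) * deriv (deriv ω) η)
      (β ^ 2 * -(c₃ * A * deriv ω e) * deriv (deriv ω) e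
        + β ^ 2 * (γ + α ^ 2 * V - c₃ * A * ω e) * deriv (deriv (deriv ω)) e) e :=
    ((((hω1 e).hasDerivAt.const_mul (c₃ * A)).const_sub (γ + α ^ 2 * V)).const_mul
      (β ^ 2)).mul (hω3 e).hasDerivAt
  have hR : HasDerivAt
      (fun η => β ^ 2 * c₂ * A * (deriv ω η) ^ 2 + (V - c₀) * ω η - c₁ * A ^ 2 * (ω η) ^ 3)
      (β ^ 2 * c₂ * A * (2 * deriv ω e ^ 1 * deriv (deriv ω) e)
        + (V - c₀) * deriv ω e
        - c₁ * A ^ 2 * (3 * ω e ^ 2 * deriv ω e)) e := by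
    exact ((((hω2 e).hasDerivAt.pow 2).const_mul (β ^ 2 * c₂ * A)).add
      ((hω1 e).hasDerivAt.const_mul (V - c₀))).sub
      (((hω1 e).hasDerivAt.pow 3).const_mul (c₁ * A ^ 2))
  have hconj := (hLR ▸ hL).unique hR
  -- t-part
  have hGt : (fun s : ℝ =>
      u x s - α ^ 2 * ε ^ 2 * deriv (fun y => deriv (fun z => u z s) y) x)
      = fun s => A * ω (p * s + k * x)
          - α ^ 2 * ε ^ 2 * (A * k * k * deriv (deriv ω) (p * s + k * x)) := by
    funext s
    rw [hu, duxx, show β * (x - V * s) / ε = p * s + k * x from by rw [hk, hp]; ring,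
      show k * x + p * s = p * s + k * x from by ring]
  have hDt : HasDerivAt (fun s => A * ω (p * s + k * x)
        - α ^ 2 * ε ^ 2 * (A * k * k * deriv (deriv ω) (p * s + k * x)))
      (A * p * deriv ω (p * t + k * x)
        - α ^ 2 * ε ^ 2 * (A * k * k * p * deriv (deriv (deriv ω)) (p * t + k * x))) t :=
    (hda ω hω1 A p (k * x) t).sub
      ((hda (deriv (deriv ω)) hω3 (A * k * k) p (k * x) t).const_mul (α ^ 2 * ε ^ 2))
  -- x-part
  have hFx : (fun y : ℝ =>
      c₀ * u y t + c₁ * (u y t) ^ 3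
        - c₂ * ε ^ 2 * (deriv (fun z => u z t) y) ^ 2
        + ε ^ 2 * (γ - c₃ * u y t) * deriv (fun z => deriv (fun w => u w t) z) y)
      = fun y => c₀ * (A * ω (k * y + p * t)) + c₁ * (A * ω (k * y + p * t)) ^ 3
          - c₂ * ε ^ 2 * (A * k * deriv ω (k * y + p * t)) ^ 2
          + ε ^ 2 * (γ - c₃ * (A * ω (k * y + p * t)))
            * (A * k * k * deriv (deriv ω) (k * y + p * t)) := by
    funext y
    rw [hu, dux, duxx, show β * (y - V * t) / ε = k * y + p * t from by rw [hk, hp]; ring]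
  have hDx : HasDerivAt (fun y => c₀ * (A * ω (k * y + p * t)) + c₁ * (A * ω (k * y + p * t)) ^ 3
        - c₂ * ε ^ 2 * (A * k * deriv ω (k * y + p * t)) ^ 2
        + ε ^ 2 * (γ - c₃ * (A * ω (k * y + p * t)))
          * (A * k * k * deriv (deriv ω) (k * y + p * t)))
      (c₀ * (A * k * deriv ω e)
        + c₁ * (3 * (A * ω e) ^ 2 * (A * k * deriv ω e))
        - c₂ * ε ^ 2 * (2 * (A * k * deriv ω e) ^ 1 * (A * k * k * deriv (deriv ω) e))
        + (ε ^ 2 * (γ - c₃ * (A * ω e)) * (A * k * k * k * deriv (deriv (deriv ω)) e)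
          + ε ^ 2 * -(c₃ * (A * k * deriv ω e)) * (A * k * k * deriv (deriv ω) e))) x := by
    have h0 := hda ω hω1 A k (p * t) x
    have h1 := hda (deriv ω) hω2 (A * k) k (p * t) x
    have h2 := hda (deriv (deriv ω)) hω3 (A * k * k) k (p * t) x
    have hc0 := h0.const_mul c₀
    have hc1 := (h0.pow 3).const_mul c₁
    have hc2 := (h1.pow 2).const_mul (c₂ * ε ^ 2)
    have hc3 := (((h0.const_mul c₃).const_sub γ).const_mul (ε ^ 2)).mul h2
    have := ((hc0.add hc1).sub hc2).add hc3
    exact this.congr_deriv (by ring)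
  rw [hGt, hDt.deriv, hFx, hDx.deriv]
  rw [show p * t + k * x = e from by rw [he]; ring]
  simp only [hk, hp]
  field_simp
  linear_combination (A * β) * hconj
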